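/- Let A, B be closed subsets of ℝ³ that are unions of closed dyadic-type cubes, and suppose trees Sₙ converge to S in Hausdorff distance with dₙ := d_H(Sₙ, S) → 0. Fix u ∈ ℕ and let 𝒞ₙ be the collection of cubes C of side 2^{−u} (vertices in 2^{−u}(ℤ³+1/2)) with dist(C, Sₙ) ≤ min{2^{−2u}, 2dₙ}, and 𝒞 the collection of such cubes with C ∩ S ≠ ∅, with Aₙ = ⋃𝒞ₙ and A = ⋃𝒞 the corresponding dyadic approximations, restricted to a fixed bounded box. Then: (a) Sₙ ⊆ Aₙ and d_H(Aₙ, Sₙ) ≤ 2^{−(u−2)} for n large; (b) the sequence (Aₙ)ₙ is eventually constant, equal to A. -/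

import Mathlib

open Filter Set Metric

noncomputable section

/-- The closed dyadic cube at scale `u` indexed by `z ∈ ℤ³`: side length `2^{−u}`, with
vertices in `2^{−u}(ℤ³ + 1/2)`. -/
def dyCube (u : ℕ) (z : Fin 3 → ℤ) : Set (EuclideanSpace ℝ (Fin 3)) :=
  {p | ∀ k, ((z k : ℝ) + 1 / 2) * (2 : ℝ) ^ (-(u : ℤ)) ≤ p k ∧
    p k ≤ ((z k : ℝ) + 3 / 2) * (2 : ℝ) ^ (-(u : ℤ))}

/-- The dyadic approximation at scale `u` of a set `S`, at tolerance `r`: the union of all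
scale-`u` cubes within distance `r` of `S`. -/
def dyApprox (u : ℕ) (S : Set (EuclideanSpace ℝ (Fin 3))) (r : ℝ) :
    Set (EuclideanSpace ℝ (Fin 3)) :=
  ⋃ z ∈ {z : Fin 3 → ℤ | ∃ p ∈ dyCube u z, Metric.infDist p S ≤ r}, dyCube u z

/-- The limiting dyadic approximation: the union of all scale-`u` cubes meeting `S`. -/
def dyApproxLimit (u : ℕ) (S : Set (EuclideanSpace ℝ (Fin 3))) :
    Set (EuclideanSpace ℝ (Fin 3)) :=
  ⋃ z ∈ {z : Fin 3 → ℤ | (dyCube u z ∩ S).Nonempty}, dyCube u z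

lemma pow_mul_zpow_neg (u : ℕ) : (2:ℝ) ^ (u:ℕ) * (2:ℝ) ^ (-(u:ℤ)) = 1 := by
  rw [← zpow_natCast (2:ℝ) u, ← zpow_add₀ (two_ne_zero)]
  simp

lemma mem_dyCube_self (u : ℕ) (x : EuclideanSpace ℝ (Fin 3)) :
    x ∈ dyCube u (fun k => ⌊x k * 2 ^ u - 1/2⌋) := by
  intro k
  have h1 : (⌊x k * 2 ^ u - 1/2⌋ : ℝ) ≤ x k * 2 ^ u - 1/2 := Int.floor_le _
  have h2 : x k * 2 ^ u - 1/2 < ⌊x k * 2 ^ u - 1/2⌋ + 1 := Int.lt_floor_add_one _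
  have he : (0:ℝ) < (2:ℝ) ^ (-(u:ℤ)) := by positivity
  have hef := pow_mul_zpow_neg u
  have hx : x k * 2 ^ u * (2:ℝ) ^ (-(u:ℤ)) = x k := by
    rw [mul_assoc, hef, mul_one]
  constructor
  · have h3 : ((⌊x k * 2 ^ u - 1/2⌋ : ℝ) + 1/2) * (2:ℝ) ^ (-(u:ℤ)) ≤
        (x k * 2 ^ u) * (2:ℝ) ^ (-(u:ℤ)) :=
      mul_le_mul_of_nonneg_right (by linarith) he.le
    simpa only [hx] using h3
  · have h3 : (x k * 2 ^ u) * (2:ℝ) ^ (-(u:ℤ)) ≤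
        ((⌊x k * 2 ^ u - 1/2⌋ : ℝ) + 3/2) * (2:ℝ) ^ (-(u:ℤ)) :=
      mul_le_mul_of_nonneg_right (by linarith) he.le
    simpa only [hx] using h3

lemma dyCube_nonempty (u : ℕ) (z : Fin 3 → ℤ) : (dyCube u z).Nonempty := by
  have he : (0:ℝ) < (2:ℝ) ^ (-(u:ℤ)) := by positivity
  exact ⟨WithLp.toLp 2 (fun k => ((z k : ℝ) + 1) * (2:ℝ) ^ (-(u:ℤ))), fun k => by
    show _ ≤ ((z k : ℝ) + 1) * (2:ℝ) ^ (-(u:ℤ)) ∧ ((z k : ℝ) + 1) * (2:ℝ) ^ (-(u:ℤ)) ≤ _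
    constructor <;> nlinarith⟩

lemma isClosed_dyCube (u : ℕ) (z : Fin 3 → ℤ) : IsClosed (dyCube u z) := by
  have : dyCube u z = ⋂ k, (fun p : EuclideanSpace ℝ (Fin 3) => p k) ⁻¹'
      Set.Icc (((z k : ℝ) + 1 / 2) * (2 : ℝ) ^ (-(u : ℤ)))
        (((z k : ℝ) + 3 / 2) * (2 : ℝ) ^ (-(u : ℤ))) := by
    ext p; simp [dyCube, Set.mem_Icc]
  rw [this]
  exact isClosed_iInter fun k => isClosed_Icc.preimage (by fun_prop)

lemma dyCube_dist_le {u : ℕ} {z : Fin 3 → ℤ} {p q : EuclideanSpace ℝ (Fin 3)}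
    (hp : p ∈ dyCube u z) (hq : q ∈ dyCube u z) :
    dist p q ≤ 2 * (2:ℝ) ^ (-(u:ℤ)) := by
  have he : (0:ℝ) < (2:ℝ) ^ (-(u:ℤ)) := by positivity
  rw [EuclideanSpace.dist_eq]
  have hb : ∀ k, dist (p k) (q k) ^ 2 ≤ ((2:ℝ) ^ (-(u:ℤ)))^2 := by
    intro k
    have h1 := hp k; have h2 := hq k
    rw [Real.dist_eq, sq_abs]
    nlinarith [h1.1, h1.2, h2.1, h2.2]
  have : ∑ k, dist (p k) (q k) ^ 2 ≤ (2 * (2:ℝ) ^ (-(u:ℤ)))^2 := by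
    rw [Fin.sum_univ_three]
    nlinarith [hb 0, hb 1, hb 2]
  calc Real.sqrt (∑ k, dist (p k) (q k) ^ 2) ≤ Real.sqrt ((2 * (2:ℝ) ^ (-(u:ℤ)))^2) :=
        Real.sqrt_le_sqrt this
    _ = 2 * (2:ℝ) ^ (-(u:ℤ)) := Real.sqrt_sq (by positivity)

lemma abs_coord_le_dist_zero (p : EuclideanSpace ℝ (Fin 3)) (k : Fin 3) :
    |p k| ≤ dist p 0 := by
  rw [EuclideanSpace.dist_eq]
  have : |p k| = Real.sqrt (dist (p k) ((0:EuclideanSpace ℝ (Fin 3)) k) ^ 2) := by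
    simp [Real.sqrt_sq_eq_abs, Real.dist_eq]
  rw [this]
  apply Real.sqrt_le_sqrt
  exact Finset.single_le_sum (f := fun i => dist (p i) ((0:EuclideanSpace ℝ (Fin 3)) i) ^ 2)
    (fun i _ => by positivity) (Finset.mem_univ k)

lemma finite_dyCube_near (u : ℕ) (R : ℝ) (hR : 0 ≤ R) :
    {z : Fin 3 → ℤ | (dyCube u z ∩ closedBall 0 R).Nonempty}.Finite := by
  set M : ℤ := ⌈(R+2) * 2^u⌉ with hM
  apply Set.Finite.subset (Set.Finite.pi (fun _ : Fin 3 => Set.finite_Icc (-M) M))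
  rintro z ⟨p, hpC, hpB⟩
  rw [Set.mem_univ_pi]
  intro k
  rw [Set.mem_Icc]
  have he : (0:ℝ) < (2:ℝ)^(-(u:ℤ)) := by positivity
  have hf1 : (1:ℝ) ≤ 2^u := one_le_pow₀ one_le_two
  have hef := pow_mul_zpow_neg u
  have hpk := abs_le.mp (le_trans (abs_coord_le_dist_zero p k) (mem_closedBall.mp hpB))
  have h1 := (hpC k).1
  have h2 := (hpC k).2
  have hceil : (R+2) * 2^u ≤ (M:ℝ) := Int.le_ceil _
  have hprod1 : ((z k:ℝ) + 1/2) * (2:ℝ)^(-(u:ℤ)) * 2^u = (z k:ℝ) + 1/2 := by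
    rw [mul_assoc, mul_comm ((2:ℝ)^(-(u:ℤ))), hef, mul_one]
  have hprod2 : ((z k:ℝ) + 3/2) * (2:ℝ)^(-(u:ℤ)) * 2^u = (z k:ℝ) + 3/2 := by
    rw [mul_assoc, mul_comm ((2:ℝ)^(-(u:ℤ))), hef, mul_one]
  have hub : ((z k:ℝ) + 1/2) * (2:ℝ)^(-(u:ℤ)) * 2^u ≤ R * 2^u :=
    mul_le_mul_of_nonneg_right (le_trans h1 hpk.2) (by positivity)
  have hlb : (-R) * 2^u ≤ ((z k:ℝ) + 3/2) * (2:ℝ)^(-(u:ℤ)) * 2^u :=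
    mul_le_mul_of_nonneg_right (le_trans hpk.1 h2) (by positivity)
  rw [hprod1] at hub
  rw [hprod2] at hlb
  constructor
  · have : (-(M:ℝ)) ≤ (z k : ℝ) := by nlinarith
    exact_mod_cast this
  · have : (z k : ℝ) ≤ (M:ℝ) := by nlinarith
    exact_mod_cast this

/-- Stability of dyadic approximations. Let compact nonempty sets `Sₙ`
(contained in a fixed bounded box) converge to `S` in Hausdorff distance, with
`dₙ = d_H(Sₙ,S)`, and fix a scale `u`. Let `Aₙ` be the union of scale-`u` cubes within
distance `min(2^{−2u}, 2dₙ)` of `Sₙ`, and `A` the union of scale-`u` cubes meeting `S`.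
Then: (a) for `n` large, `Sₙ ⊆ Aₙ` and `d_H(Aₙ, Sₙ) ≤ 2^{−(u−2)}`; (b) the sequence
`(Aₙ)` is eventually constant, equal to `A`. -/
theorem dyadic_approximation_stability (u : ℕ) (Rbox : ℝ) (hR : 0 < Rbox)
    (Sn : ℕ → Set (EuclideanSpace ℝ (Fin 3))) (S : Set (EuclideanSpace ℝ (Fin 3)))
    (hScomp : IsCompact S) (hSne : S.Nonempty)
    (hSncomp : ∀ n, IsCompact (Sn n)) (hSnne : ∀ n, (Sn n).Nonempty)
    (hSsub : S ⊆ Metric.closedBall 0 Rbox) (hSnsub : ∀ n, Sn n ⊆ Metric.closedBall 0 Rbox)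
    (hconv : Tendsto (fun n => Metric.hausdorffDist (Sn n) S) atTop (nhds 0)) :
    (∀ᶠ n in atTop,
      Sn n ⊆ dyApprox u (Sn n)
          (min ((2 : ℝ) ^ (-(2 * u : ℤ))) (2 * Metric.hausdorffDist (Sn n) S)) ∧
      Metric.hausdorffDist
          (dyApprox u (Sn n)
            (min ((2 : ℝ) ^ (-(2 * u : ℤ))) (2 * Metric.hausdorffDist (Sn n) S)))
          (Sn n) ≤ (2 : ℝ) ^ ((2 : ℤ) - u)) ∧
    (∃ N : ℕ, ∀ n ≥ N,
      dyApprox u (Sn n)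
          (min ((2 : ℝ) ^ (-(2 * u : ℤ))) (2 * Metric.hausdorffDist (Sn n) S)) =
        dyApproxLimit u S) := by
  have hEne : ∀ n, EMetric.hausdorffEdist (Sn n) S ≠ ⊤ := fun n =>
    Metric.hausdorffEdist_ne_top_of_nonempty_of_bounded (hSnne n) hSne (hSncomp n).isBounded
      hScomp.isBounded
  have he : (0:ℝ) < (2:ℝ) ^ (-(u:ℤ)) := by positivity
  have h2u : (2:ℝ) ^ (-(2*u:ℤ)) ≤ (2:ℝ) ^ (-(u:ℤ)) := by
    apply zpow_le_zpow_right₀ one_le_two; omega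
  have h2u1 : (2:ℝ) ^ (-(2*u:ℤ)) ≤ 1 := by
    calc (2:ℝ) ^ (-(2*u:ℤ)) ≤ (2:ℝ)^(0:ℤ) := zpow_le_zpow_right₀ one_le_two (by omega)
      _ = 1 := by norm_num
  have hrnonneg : ∀ n, (0:ℝ) ≤
      min ((2 : ℝ) ^ (-(2 * u : ℤ))) (2 * Metric.hausdorffDist (Sn n) S) := fun n =>
    le_min (by positivity) (mul_nonneg zero_le_two hausdorffDist_nonneg)
  have hsub : ∀ n, Sn n ⊆ dyApprox u (Sn n)
      (min ((2 : ℝ) ^ (-(2 * u : ℤ))) (2 * Metric.hausdorffDist (Sn n) S)) := by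
    intro n x hx
    exact Set.mem_biUnion
      ⟨x, mem_dyCube_self u x, by rw [infDist_zero_of_mem hx]; exact hrnonneg n⟩
      (mem_dyCube_self u x)
  have h4e : (2:ℝ)^((2:ℤ)-u) = 4 * (2:ℝ)^(-(u:ℤ)) := by
    rw [show (2:ℤ)-u = 2 + (-(u:ℤ)) by ring, zpow_add₀ (two_ne_zero)]
    norm_num
  constructor
  · refine Eventually.of_forall fun n => ⟨hsub n, ?_⟩
    apply hausdorffDist_le_of_infDist (by positivity)
    · intro x hx
      simp only [dyApprox, mem_iUnion, mem_setOf_eq] at hx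
      obtain ⟨z, ⟨p, hpC, hpd⟩, hxC⟩ := hx
      have h1 : infDist x (Sn n) ≤ infDist p (Sn n) + dist x p := infDist_le_infDist_add_dist
      have h2 : dist x p ≤ 2 * (2:ℝ)^(-(u:ℤ)) := dyCube_dist_le hxC hpC
      have h3 : infDist p (Sn n) ≤ (2:ℝ) ^ (-(2*u:ℤ)) := le_trans hpd (min_le_left _ _)
      rw [h4e]
      linarith
    · intro x hx
      rw [infDist_zero_of_mem (hsub n hx)]
      positivity
  · -- part b
    set Z : Set (Fin 3 → ℤ) := {z | (dyCube u z ∩ closedBall 0 (Rbox+3)).Nonempty} with hZ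
    have hZfin : Z.Finite := finite_dyCube_near u (Rbox+3) (by linarith)
    set G : Set (Fin 3 → ℤ) := {z | z ∈ Z ∧ dyCube u z ∩ S = ∅} with hG
    have hGfin : G.Finite := hZfin.subset fun z hz => hz.1
    have key : ∀ z, ∃ δ : ℝ, 0 < δ ∧ (z ∈ G → ∀ p ∈ dyCube u z, δ ≤ infDist p S) := by
      intro z
      by_cases hz : z ∈ G
      · obtain ⟨x₀, hx₀S, hmin⟩ := hScomp.exists_isMinOn hSne
          (continuous_infDist_pt (dyCube u z)).continuousOn
        refine ⟨infDist x₀ (dyCube u z), ?_, ?_⟩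
        · rw [← (isClosed_dyCube u z).notMem_iff_infDist_pos (dyCube_nonempty u z)]
          intro hx₀C
          exact (Set.eq_empty_iff_forall_notMem.mp hz.2 x₀) ⟨hx₀C, hx₀S⟩
        · intro _ p hp
          by_contra hlt
          push_neg at hlt
          obtain ⟨s, hsS, hds⟩ := (infDist_lt_iff hSne).mp hlt
          have hm := isMinOn_iff.mp hmin s hsS
          have h2 : infDist s (dyCube u z) ≤ dist s p := infDist_le_dist_of_mem hp
          rw [dist_comm] at hds
          linarith
      · exact ⟨1, one_pos, fun h => absurd h hz⟩
    choose δf hδpos hδ using key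
    obtain ⟨δ, hδ0, hδle⟩ : ∃ δ > 0, ∀ z ∈ G, δ ≤ δf z := by
      rcases hGfin.toFinset.eq_empty_or_nonempty with h | h
      · exact ⟨1, one_pos, fun z hz =>
          absurd (hGfin.mem_toFinset.mpr hz) (by rw [h]; simp)⟩
      · refine ⟨hGfin.toFinset.inf' h δf, ?_,
          fun z hz => Finset.inf'_le _ (hGfin.mem_toFinset.mpr hz)⟩
        rw [gt_iff_lt, Finset.lt_inf'_iff]
        exact fun z _ => hδpos z
    set ε : ℝ := min ((2:ℝ)^(-(2*u:ℤ))/2) (δ/3) with hε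
    have hεpos : 0 < ε := lt_min (by positivity) (by linarith)
    obtain ⟨N, hN⟩ := eventually_atTop.mp (hconv.eventually (gt_mem_nhds hεpos))
    refine ⟨N, fun n hn => ?_⟩
    have hdn : hausdorffDist (Sn n) S < ε := hN n hn
    have hd0 : 0 ≤ hausdorffDist (Sn n) S := hausdorffDist_nonneg
    have hε1 : ε ≤ (2:ℝ)^(-(2*u:ℤ))/2 := min_le_left _ _
    have hε2 : ε ≤ δ/3 := min_le_right _ _
    have hd2u : hausdorffDist (Sn n) S ≤ (2:ℝ)^(-(2*u:ℤ)) := by linarith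
    have hsets : {z : Fin 3 → ℤ | ∃ p ∈ dyCube u z, infDist p (Sn n) ≤
          min ((2 : ℝ) ^ (-(2 * u : ℤ))) (2 * Metric.hausdorffDist (Sn n) S)}
        = {z : Fin 3 → ℤ | (dyCube u z ∩ S).Nonempty} := by
      ext z
      simp only [mem_setOf_eq]
      constructor
      · rintro ⟨p, hpC, hpd⟩
        by_contra hempty
        rw [Set.not_nonempty_iff_eq_empty] at hempty
        have hpd2 : infDist p (Sn n) ≤ 2 * hausdorffDist (Sn n) S :=
          le_trans hpd (min_le_right _ _)
        have hp2 : infDist p (Sn n) < 2 := by linarith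
        obtain ⟨q, hqSn, hq⟩ := (infDist_lt_iff (hSnne n)).mp hp2
        have hq0 : dist q 0 ≤ Rbox := mem_closedBall.mp (hSnsub n hqSn)
        have hpball : p ∈ closedBall 0 (Rbox+3) := by
          rw [mem_closedBall]
          calc dist p 0 ≤ dist p q + dist q 0 := dist_triangle _ _ _
            _ ≤ Rbox + 3 := by linarith
        have hzG : z ∈ G := ⟨⟨p, hpC, hpball⟩, hempty⟩
        have h1 : infDist p S ≤ infDist p (Sn n) + hausdorffDist (Sn n) S :=
          infDist_le_infDist_add_hausdorffDist (hEne n)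
        have h2 : δ ≤ infDist p S := le_trans (hδle z hzG) (hδ z hzG p hpC)
        linarith
      · rintro ⟨x, hxC, hxS⟩
        have hxd : infDist x (Sn n) ≤ hausdorffDist (Sn n) S := by
          calc infDist x (Sn n) ≤ hausdorffDist S (Sn n) :=
                infDist_le_hausdorffDist_of_mem hxS (by rw [EMetric.hausdorffEdist_comm]; exact hEne n)
            _ = hausdorffDist (Sn n) S := hausdorffDist_comm
        exact ⟨x, hxC, le_min (le_trans hxd hd2u) (by linarith)⟩
    simp only [dyApprox, dyApproxLimit]
    rw [hsets]
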